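/- arXiv:2508.04991 — 2 statements merged into one kernel-verified Lean document; each statement's English description precedes it below -/
import Mathlib

section
/- Let f = (f_1,…,f_q) be a vector polynomial and S ⊆ ℝⁿ a nonempty set. (i) If SOL^w(S_∞, f^∞) = ∅, then f_i is unbounded from below on S for every i ∈ {1,…,q}. (ii) If SOL^s(S_∞, f^∞) = ∅, then f_{i₀} is unbounded from below on S for some i₀ ∈ {1,…,q}. -/
open Filter Topology MvPolynomial Bornology

noncomputable section

/-- The asymptotic (recession) cone of a set `A ⊆ ℝⁿ`. -/
def asymCone {n : ℕ} (A : Set (Fin n → ℝ)) : Set (Fin n → ℝ) :=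
  {v | ∃ (t : ℕ → ℝ) (x : ℕ → (Fin n → ℝ)),
    Filter.Tendsto t Filter.atTop Filter.atTop ∧ (∀ k, x k ∈ A) ∧
    Filter.Tendsto (fun k => (t k)⁻¹ • x k) Filter.atTop (nhds v)}

/-- Pareto efficient solutions of the vector map `g` on `C`. -/
def SOLs {n q : ℕ} (C : Set (Fin n → ℝ)) (g : Fin q → (Fin n → ℝ) → ℝ) :
    Set (Fin n → ℝ) :=
  {x | x ∈ C ∧ ¬ ∃ y ∈ C, (∀ i, g i y ≤ g i x) ∧ (∃ i, g i y ≠ g i x)}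

/-- Weak Pareto efficient solutions of the vector map `g` on `C`. -/
def SOLw {n q : ℕ} (C : Set (Fin n → ℝ)) (g : Fin q → (Fin n → ℝ) → ℝ) :
    Set (Fin n → ℝ) :=
  {x | x ∈ C ∧ ¬ ∃ y ∈ C, ∀ i, g i y < g i x}

/-- Global minimizers of a scalar function `p` on `C`. -/
def SOLmin {n : ℕ} (C : Set (Fin n → ℝ)) (p : (Fin n → ℝ) → ℝ) :
    Set (Fin n → ℝ) :=
  {x | x ∈ C ∧ ∀ y ∈ C, p x ≤ p y}

/-- The recession polynomial (leading term: top-degree homogeneous part) of a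
polynomial, as a function on `ℝⁿ`. -/
noncomputable def recPoly {n : ℕ} (p : MvPolynomial (Fin n) ℝ) : (Fin n → ℝ) → ℝ :=
  fun x => MvPolynomial.eval x (MvPolynomial.homogeneousComponent p.totalDegree p)

lemma eval_smul_homog {n : ℕ} {p : MvPolynomial (Fin n) ℝ} {D : ℕ}
    (hp : p.IsHomogeneous D) (c : ℝ) (x : Fin n → ℝ) :
    eval (c • x) p = c ^ D * eval x p := by
  rw [eval_eq, eval_eq, Finset.mul_sum]
  refine Finset.sum_congr rfl fun m hm => ?_
  have hdeg : ∑ i ∈ m.support, m i = D := by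
    have h := hp (mem_support_iff.mp hm)
    rw [show (Finsupp.weight (1 : Fin n → ℕ)) = Finsupp.weight (fun _ => 1) from rfl,
      ← Finsupp.degree_eq_weight_one] at h
    simpa [Finsupp.degree_apply] using h
  have : ∏ i ∈ m.support, (c • x) i ^ m i
      = c ^ D * ∏ i ∈ m.support, x i ^ m i := by
    simp only [Pi.smul_apply, smul_eq_mul, mul_pow, Finset.prod_mul_distrib,
      Finset.prod_pow_eq_pow_sum, hdeg]
  rw [this]; ring

lemma unbounded_of_neg {n : ℕ} {p : MvPolynomial (Fin n) ℝ}
    (hdeg : 1 ≤ p.totalDegree) {S : Set (Fin n → ℝ)} {v : Fin n → ℝ}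
    (hv : v ∈ asymCone S)
    (hneg : eval v (homogeneousComponent p.totalDegree p) < 0) :
    ¬ ∃ m : ℝ, ∀ x ∈ S, m ≤ eval x p := by
  obtain ⟨t, x, ht, hxS, hlim⟩ := hv
  set D := p.totalDegree with hD
  set u : ℕ → (Fin n → ℝ) := fun k => (t k)⁻¹ • x k with hu
  have ht0 : ∀ᶠ k in atTop, 0 < t k := ht.eventually_gt_atTop 0
  -- ratio limits
  have hratio : ∀ d ∈ Finset.range (D + 1),
      Tendsto (fun k => (t k) ^ d / (t k) ^ D *
        eval (u k) (homogeneousComponent d p)) atTop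
        (𝓝 (if d = D then eval v (homogeneousComponent D p) else 0)) := by
    intro d hd
    have hev : Tendsto (fun k => eval (u k) (homogeneousComponent d p)) atTop
        (𝓝 (eval v (homogeneousComponent d p))) :=
      ((MvPolynomial.continuous_eval _).tendsto v).comp hlim
    rcases eq_or_ne d D with rfl | hne
    · simp only [if_pos rfl]
      have h1 : Tendsto (fun k => (t k) ^ D / (t k) ^ D) atTop (𝓝 (1 : ℝ)) := by
        refine Tendsto.congr' ?_ tendsto_const_nhds
        filter_upwards [ht0] with k hk
        rw [div_self (pow_ne_zero _ hk.ne')]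
      simpa using (h1.mul hev)
    · simp only [if_neg hne]
      have hdlt : d < D := lt_of_le_of_ne (Nat.lt_succ_iff.mp (Finset.mem_range.mp hd)) hne
      have h2 : Tendsto (fun k => (t k) ^ d / (t k) ^ D) atTop (𝓝 (0 : ℝ)) := by
        have hpow : Tendsto (fun k => (t k) ^ (D - d)) atTop atTop :=
          (tendsto_pow_atTop (by omega)).comp ht
        refine Tendsto.congr' ?_ hpow.inv_tendsto_atTop
        filter_upwards [ht0] with k hk
        simp only [Pi.inv_apply]
        rw [pow_sub₀ _ hk.ne' hdlt.le, mul_inv, inv_inv, mul_comm, ← div_eq_mul_inv]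
      simpa using (h2.mul hev)
  have hsum : Tendsto (fun k => ∑ d ∈ Finset.range (D + 1),
      (t k) ^ d / (t k) ^ D * eval (u k) (homogeneousComponent d p)) atTop
      (𝓝 (eval v (homogeneousComponent D p))) := by
    have := tendsto_finset_sum (Finset.range (D + 1)) hratio
    simpa [Finset.sum_ite_eq' (Finset.range (D + 1)) D] using this
  -- identify sum with eval (x k) p / (t k)^D
  have hkey : ∀ᶠ k in atTop, eval (x k) p / (t k) ^ D
      = ∑ d ∈ Finset.range (D + 1),
        (t k) ^ d / (t k) ^ D * eval (u k) (homogeneousComponent d p) := by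
    filter_upwards [ht0] with k hk
    have hx : x k = t k • u k := by
      rw [hu]; simp [smul_smul, mul_inv_cancel₀ hk.ne']
    have : eval (x k) p = ∑ d ∈ Finset.range (D + 1),
        (t k) ^ d * eval (u k) (homogeneousComponent d p) := by
      conv_lhs => rw [← sum_homogeneousComponent p]
      rw [map_sum]
      refine Finset.sum_congr rfl fun d _ => ?_
      rw [hx, eval_smul_homog (homogeneousComponent_isHomogeneous d p)]
    rw [this, Finset.sum_div]
    exact Finset.sum_congr rfl fun d _ => by rw [mul_div_right_comm]
  have hrat : Tendsto (fun k => eval (x k) p / (t k) ^ D) atTop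
      (𝓝 (eval v (homogeneousComponent D p))) := hsum.congr' (hkey.mono fun _ h => h.symm)
  have hbot : Tendsto (fun k => eval (x k) p) atTop atBot := by
    have hpowD : Tendsto (fun k => (t k) ^ D) atTop atTop :=
      (tendsto_pow_atTop (by omega)).comp ht
    have := hrat.neg_mul_atTop hneg hpowD
    refine this.congr' ?_
    filter_upwards [ht0] with k hk
    field_simp
  rintro ⟨m, hm⟩
  have := (hbot.eventually_lt_atBot m).exists
  obtain ⟨k, hk⟩ := this
  exact absurd (hm _ (hxS k)) (not_le.mpr hk)

lemma recPoly_zero' {n : ℕ} {p : MvPolynomial (Fin n) ℝ} (hdeg : 1 ≤ p.totalDegree) :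
    recPoly p (0 : Fin n → ℝ) = 0 := by
  have h := eval_smul_homog (homogeneousComponent_isHomogeneous p.totalDegree p)
    (0 : ℝ) (0 : Fin n → ℝ)
  rw [smul_zero] at h
  rw [recPoly, h, zero_pow (by omega), zero_mul]

lemma zero_mem_asymCone {n : ℕ} {S : Set (Fin n → ℝ)} (hS : S.Nonempty) :
    (0 : Fin n → ℝ) ∈ asymCone S := by
  obtain ⟨x₀, hx₀⟩ := hS
  refine ⟨fun k => (k : ℝ) + 1, fun _ => x₀, ?_, fun _ => hx₀, ?_⟩
  · exact tendsto_atTop_add_const_right _ 1 tendsto_natCast_atTop_atTop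
  · have h1 : Tendsto (fun k : ℕ => ((k : ℝ) + 1)⁻¹) atTop (𝓝 0) :=
      tendsto_inv_atTop_zero.comp
        (tendsto_atTop_add_const_right _ 1 tendsto_natCast_atTop_atTop)
    simpa using h1.smul_const x₀

theorem stmt2 {n q : ℕ} (f : Fin q → MvPolynomial (Fin n) ℝ)
    (hdeg : ∀ i, 1 ≤ (f i).totalDegree)
    (S : Set (Fin n → ℝ)) (hSne : S.Nonempty) :
    (SOLw (asymCone S) (fun i => recPoly (f i)) = ∅ →
      ∀ i, ¬ ∃ m : ℝ, ∀ x ∈ S, m ≤ eval x (f i)) ∧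
    (SOLs (asymCone S) (fun i => recPoly (f i)) = ∅ →
      ∃ i, ¬ ∃ m : ℝ, ∀ x ∈ S, m ≤ eval x (f i)) := by
  have h0 : (0 : Fin n → ℝ) ∈ asymCone S := zero_mem_asymCone hSne
  constructor
  · intro hw i
    have h0n : (0 : Fin n → ℝ) ∉ SOLw (asymCone S) (fun i => recPoly (f i)) := by
      rw [hw]; exact Set.notMem_empty _
    simp only [SOLw, Set.mem_setOf_eq, not_and, not_not] at h0n
    obtain ⟨v, hvC, hvlt⟩ := h0n h0
    have hneg : eval v (homogeneousComponent (f i).totalDegree (f i)) < 0 := by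
      have := hvlt i
      rwa [recPoly_zero' (hdeg i)] at this
    exact unbounded_of_neg (hdeg i) hvC hneg
  · intro hs
    have h0n : (0 : Fin n → ℝ) ∉ SOLs (asymCone S) (fun i => recPoly (f i)) := by
      rw [hs]; exact Set.notMem_empty _
    simp only [SOLs, Set.mem_setOf_eq, not_and, not_not] at h0n
    obtain ⟨v, hvC, hle, i, hne⟩ := h0n h0
    have hneg : eval v (homogeneousComponent (f i).totalDegree (f i)) < 0 := by
      have h1 := hle i
      have h2 := hne
      rw [recPoly_zero' (hdeg i)] at h1 h2
      exact lt_of_le_of_ne h1 h2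
    exact ⟨i, unbounded_of_neg (hdeg i) hvC hneg⟩
end
end

section
/- Let K ⊆ ℝⁿ be a nonempty closed set and p : ℝⁿ → ℝ a real polynomial of degree d ≥ 1 with leading term p^∞ (the degree-d homogeneous part of p). The following are equivalent: (i) p is bounded from below on K and there exist x̄ ∈ K and a nonempty closed set S ⊆ ℝⁿ with ({x ∈ K : p(x) ≤ p(x̄)})_∞ ⊆ S_∞ ⊆ K_∞ such that SOL(S_∞, p^∞) is bounded; (ii) the set SOL(K, p) of global minimizers of p on K is nonempty and bounded. -/
open Filter Topology MvPolynomial Bornology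

noncomputable section

/- ### Auxiliary lemmas -/

lemma eval_smul_of_isHomogeneous {n : ℕ} {q : MvPolynomial (Fin n) ℝ} {m : ℕ}
    (hq : q.IsHomogeneous m) (c : ℝ) (x : Fin n → ℝ) :
    eval (c • x) q = c ^ m * eval x q := by
  rw [eval_eq', eval_eq', Finset.mul_sum]
  refine Finset.sum_congr rfl fun d hd => ?_
  have hdm : ∑ i, d i = m := by
    have h1 := hq (mem_support_iff.mp hd)
    change Finsupp.weight (fun _ => 1) d = m at h1
    rw [← Finsupp.degree_eq_weight_one] at h1
    rw [← h1, Finsupp.degree]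
    exact (Finset.sum_subset (Finset.subset_univ _)
      (fun i _ hi => by simpa using Finsupp.notMem_support_iff.mp hi)).symm
  have : ∀ i : Fin n, (c • x) i ^ d i = c ^ d i * x i ^ d i := by
    intro i; rw [Pi.smul_apply, smul_eq_mul, mul_pow]
  rw [Finset.prod_congr rfl (fun i _ => this i), Finset.prod_mul_distrib,
    Finset.prod_pow_eq_pow_sum, hdm]
  ring

lemma recPoly_smul {n : ℕ} (p : MvPolynomial (Fin n) ℝ) (c : ℝ) (x : Fin n → ℝ) :
    recPoly p (c • x) = c ^ p.totalDegree * recPoly p x :=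
  eval_smul_of_isHomogeneous (homogeneousComponent_isHomogeneous _ p) c x

lemma tendsto_eval_div_pow {n : ℕ} (p : MvPolynomial (Fin n) ℝ) (t : ℕ → ℝ)
    (u : ℕ → Fin n → ℝ) (v : Fin n → ℝ)
    (ht : Tendsto t atTop atTop) (hu : Tendsto u atTop (𝓝 v)) :
    Tendsto (fun k => eval (t k • u k) p / (t k) ^ p.totalDegree) atTop
      (𝓝 (recPoly p v)) := by
  set D := p.totalDegree with hD
  have hsplit : ∀ k, eval (t k • u k) p / (t k) ^ D =
      ∑ i ∈ Finset.range (D + 1),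
        ((t k) ^ i / (t k) ^ D) * eval (u k) (homogeneousComponent i p) := by
    intro k
    conv_lhs => rw [← p.sum_homogeneousComponent]
    rw [map_sum, Finset.sum_div]
    refine Finset.sum_congr rfl fun i _ => ?_
    rw [eval_smul_of_isHomogeneous (homogeneousComponent_isHomogeneous i p)]
    ring
  simp only [hsplit]
  have hlim : Tendsto
      (fun k => ∑ i ∈ Finset.range (D + 1),
        ((t k) ^ i / (t k) ^ D) * eval (u k) (homogeneousComponent i p)) atTop
      (𝓝 (∑ i ∈ Finset.range (D + 1),
        (if i = D then (1:ℝ) else 0) * eval v (homogeneousComponent i p))) := by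
    refine tendsto_finset_sum _ fun i hi => ?_
    have heval : Tendsto (fun k => eval (u k) (homogeneousComponent i p)) atTop
        (𝓝 (eval v (homogeneousComponent i p))) :=
      ((MvPolynomial.continuous_eval _).tendsto v).comp hu
    refine Tendsto.mul ?_ heval
    rcases eq_or_lt_of_le (Nat.lt_succ_iff.mp (Finset.mem_range.mp hi)) with h | h
    · simp only [h, if_pos rfl]
      have : ∀ᶠ k in atTop, (t k) ^ D / (t k) ^ D = 1 := by
        filter_upwards [ht.eventually_gt_atTop 0] with k hk
        exact div_self (pow_ne_zero _ (ne_of_gt hk))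
      exact Tendsto.congr' (this.mono fun k hk => hk.symm) tendsto_const_nhds
    · simp only [if_neg (ne_of_lt h)]
      have h2 : ∀ᶠ k in atTop, (t k) ^ i / (t k) ^ D = ((t k) ^ (D - i))⁻¹ := by
        filter_upwards [ht.eventually_gt_atTop 0] with k hk
        field_simp
        rw [← pow_add, Nat.add_sub_cancel' h.le]
      refine Tendsto.congr' (h2.mono fun k hk => hk.symm) ?_
      exact ((tendsto_pow_atTop (Nat.sub_ne_zero_of_lt h)).comp ht).inv_tendsto_atTop
  have hsum : (∑ i ∈ Finset.range (D + 1),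
      (if i = D then (1:ℝ) else 0) * eval v (homogeneousComponent i p)) = recPoly p v := by
    simp only [ite_mul, one_mul, zero_mul]
    rw [Finset.sum_ite_eq' (Finset.range (D + 1)) D
      (fun i => eval v (homogeneousComponent i p))]
    simp [recPoly, hD]
  exact hsum ▸ hlim

lemma asymCone_mono {n : ℕ} {A B : Set (Fin n → ℝ)} (h : A ⊆ B) :
    asymCone A ⊆ asymCone B := by
  rintro v ⟨t, x, ht, hx, hlim⟩
  exact ⟨t, x, ht, fun k => h (hx k), hlim⟩

lemma zero_mem_asymCone_s17 {n : ℕ} {A : Set (Fin n → ℝ)} (hA : A.Nonempty) :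
    (0 : Fin n → ℝ) ∈ asymCone A := by
  obtain ⟨a, ha⟩ := hA
  refine ⟨fun k => (k : ℝ), fun _ => a, tendsto_natCast_atTop_atTop, fun _ => ha, ?_⟩
  have : Tendsto (fun k : ℕ => ((k : ℝ))⁻¹) atTop (𝓝 0) :=
    tendsto_inv_atTop_zero.comp tendsto_natCast_atTop_atTop
  simpa using this.smul_const a

lemma asymCone_subset_zero {n : ℕ} {A : Set (Fin n → ℝ)} (hA : IsBounded A) :
    asymCone A ⊆ {0} := by
  rintro v ⟨t, x, ht, hx, hlim⟩
  obtain ⟨R, hR⟩ := hA.exists_norm_le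
  have h0 : Tendsto (fun k => (t k)⁻¹ • x k) atTop (𝓝 0) := by
    apply squeeze_zero_norm (a := fun k => |t k|⁻¹ * R)
    · intro k
      rw [norm_smul, norm_inv, Real.norm_eq_abs]
      exact mul_le_mul_of_nonneg_left (hR _ (hx k)) (inv_nonneg.2 (abs_nonneg _))
    · have : Tendsto (fun k => |t k|) atTop atTop := tendsto_abs_atTop_atTop.comp ht
      simpa using (this.inv_tendsto_atTop).mul_const R
  simpa using tendsto_nhds_unique hlim h0

lemma smul_mem_asymCone {n : ℕ} {A : Set (Fin n → ℝ)} {c : ℝ} (hc : 0 < c)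
    {v : Fin n → ℝ} (hv : v ∈ asymCone A) : c • v ∈ asymCone A := by
  obtain ⟨t, x, ht, hx, hlim⟩ := hv
  refine ⟨fun k => t k / c, x, ht.atTop_div_const hc, hx, ?_⟩
  have : (fun k => (t k / c)⁻¹ • x k) = fun k => c • ((t k)⁻¹ • x k) := by
    funext k
    rw [div_eq_mul_inv, mul_inv, inv_inv, mul_comm, mul_smul]
  rw [this]
  exact hlim.const_smul c

lemma exists_unit_asymCone {n : ℕ} {A : Set (Fin n → ℝ)} (hA : ¬ IsBounded A) :
    ∃ v : Fin n → ℝ, ‖v‖ = 1 ∧ v ∈ asymCone A := by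
  have h : ∀ k : ℕ, ∃ x ∈ A, (k : ℝ) < ‖x‖ := by
    intro k
    by_contra hcon
    push_neg at hcon
    exact hA (isBounded_iff_forall_norm_le.mpr ⟨k, hcon⟩)
  choose x hxA hxn using h
  have hpos : ∀ k, 0 < ‖x k‖ := fun k => lt_of_le_of_lt (Nat.cast_nonneg k) (hxn k)
  set u : ℕ → Fin n → ℝ := fun k => ‖x k‖⁻¹ • x k with hu
  have husphere : ∀ k, u k ∈ Metric.sphere (0 : Fin n → ℝ) 1 := by
    intro k
    rw [Metric.mem_sphere, dist_zero_right, norm_smul, norm_inv, norm_norm,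
      inv_mul_cancel₀ (ne_of_gt (hpos k))]
  obtain ⟨v, hv, φ, hφ, hconv⟩ :=
    (isCompact_sphere (0 : Fin n → ℝ) 1).tendsto_subseq husphere
  refine ⟨v, by simpa [dist_zero_right] using hv,
    fun k => ‖x (φ k)‖, x ∘ φ, ?_, fun k => hxA _, hconv⟩
  refine tendsto_atTop_mono (fun k => ?_) tendsto_natCast_atTop_atTop
  calc (k : ℝ) ≤ (φ k : ℝ) := Nat.cast_le.2 hφ.le_apply
    _ ≤ ‖x (φ k)‖ := (hxn (φ k)).le

/-- If `p ≥ m` on `A`, then the recession polynomial is nonnegative on the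
asymptotic cone of `A`. -/
lemma recPoly_nonneg_on_asymCone {n : ℕ} {A : Set (Fin n → ℝ)}
    {p : MvPolynomial (Fin n) ℝ} (hdeg : 1 ≤ p.totalDegree) {m : ℝ}
    (hm : ∀ x ∈ A, m ≤ eval x p) {v : Fin n → ℝ} (hv : v ∈ asymCone A) :
    0 ≤ recPoly p v := by
  obtain ⟨t, x, ht, hx, hlim⟩ := hv
  have key := tendsto_eval_div_pow p t (fun k => (t k)⁻¹ • x k) v ht hlim
  have heq : ∀ᶠ k in atTop, eval (t k • (t k)⁻¹ • x k) p / (t k) ^ p.totalDegree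
      = eval (x k) p / (t k) ^ p.totalDegree := by
    filter_upwards [ht.eventually_gt_atTop 0] with k hk
    rw [smul_smul, mul_inv_cancel₀ (ne_of_gt hk), one_smul]
  have key2 : Tendsto (fun k => eval (x k) p / (t k) ^ p.totalDegree) atTop
      (𝓝 (recPoly p v)) := key.congr' heq
  have hzero : Tendsto (fun k => m / (t k) ^ p.totalDegree) atTop (𝓝 0) :=
    Tendsto.div_atTop tendsto_const_nhds
      ((tendsto_pow_atTop (by omega)).comp ht)
  refine le_of_tendsto_of_tendsto hzero key2 ?_
  filter_upwards [ht.eventually_gt_atTop 0] with k hk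
  gcongr
  exact hm _ (hx k)

/-- If `p ≤ c` on `A`, then the recession polynomial is nonpositive on the
asymptotic cone of `A`. -/
lemma recPoly_nonpos_on_asymCone {n : ℕ} {A : Set (Fin n → ℝ)}
    {p : MvPolynomial (Fin n) ℝ} (hdeg : 1 ≤ p.totalDegree) {c : ℝ}
    (hc : ∀ x ∈ A, eval x p ≤ c) {v : Fin n → ℝ} (hv : v ∈ asymCone A) :
    recPoly p v ≤ 0 := by
  obtain ⟨t, x, ht, hx, hlim⟩ := hv
  have key := tendsto_eval_div_pow p t (fun k => (t k)⁻¹ • x k) v ht hlim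
  have heq : ∀ᶠ k in atTop, eval (t k • (t k)⁻¹ • x k) p / (t k) ^ p.totalDegree
      = eval (x k) p / (t k) ^ p.totalDegree := by
    filter_upwards [ht.eventually_gt_atTop 0] with k hk
    rw [smul_smul, mul_inv_cancel₀ (ne_of_gt hk), one_smul]
  have key2 : Tendsto (fun k => eval (x k) p / (t k) ^ p.totalDegree) atTop
      (𝓝 (recPoly p v)) := key.congr' heq
  have hzero : Tendsto (fun k => c / (t k) ^ p.totalDegree) atTop (𝓝 0) :=
    Tendsto.div_atTop tendsto_const_nhds
      ((tendsto_pow_atTop (by omega)).comp ht)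
  refine le_of_tendsto_of_tendsto key2 hzero ?_
  filter_upwards [ht.eventually_gt_atTop 0] with k hk
  gcongr
  exact hc _ (hx k)

theorem stmt17 {n : ℕ} (K : Set (Fin n → ℝ)) (hKne : K.Nonempty) (hKcl : IsClosed K)
    (p : MvPolynomial (Fin n) ℝ) (hdeg : 1 ≤ p.totalDegree) :
    ((∃ m : ℝ, ∀ x ∈ K, m ≤ eval x p) ∧
      ∃ xbar ∈ K, ∃ S : Set (Fin n → ℝ), S.Nonempty ∧ IsClosed S ∧
        asymCone {x ∈ K | eval x p ≤ eval xbar p} ⊆ asymCone S ∧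
        asymCone S ⊆ asymCone K ∧
        Bornology.IsBounded (SOLmin (asymCone S) (recPoly p))) ↔
    ((SOLmin K (fun x => eval x p)).Nonempty ∧
      Bornology.IsBounded (SOLmin K (fun x => eval x p))) := by
  constructor
  · rintro ⟨⟨m, hm⟩, xbar, hxbarK, S, hSne, hScl, hLS, hSK, hSbdd⟩
    set L : Set (Fin n → ℝ) := {x ∈ K | eval x p ≤ eval xbar p} with hLdef
    have hLne : L.Nonempty := ⟨xbar, hxbarK, le_refl _⟩
    have hLcl : IsClosed L :=
      hKcl.inter (isClosed_le (MvPolynomial.continuous_eval p) continuous_const)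
    -- L is bounded
    have hLbdd : IsBounded L := by
      by_contra hLb
      obtain ⟨v, hv1, hvL⟩ := exists_unit_asymCone hLb
      have hvS : v ∈ asymCone S := hLS hvL
      have hle : recPoly p v ≤ 0 :=
        recPoly_nonpos_on_asymCone hdeg (fun x hx => hx.2) hvL
      have hge : 0 ≤ recPoly p v :=
        recPoly_nonneg_on_asymCone hdeg hm (hSK hvS)
      have hv0 : recPoly p v = 0 := le_antisymm hle hge
      -- every positive multiple of v is a global minimizer of recPoly on asymCone S
      have hray : ∀ c : ℝ, 0 < c → c • v ∈ SOLmin (asymCone S) (recPoly p) := by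
        intro c hc
        refine ⟨smul_mem_asymCone hc hvS, fun y hy => ?_⟩
        rw [recPoly_smul, hv0, mul_zero]
        exact recPoly_nonneg_on_asymCone hdeg hm (hSK hy)
      obtain ⟨R, hR⟩ := hSbdd.exists_norm_le
      have hc : (0:ℝ) < max 1 (R + 1) := lt_of_lt_of_le one_pos (le_max_left _ _)
      have := hR _ (hray _ hc)
      rw [norm_smul, hv1, mul_one, Real.norm_eq_abs, abs_of_pos hc] at this
      have : R + 1 ≤ R := le_trans (le_max_right _ _) this
      linarith
    -- existence of a global minimizer
    have hLcomp : IsCompact L := Metric.isCompact_of_isClosed_isBounded hLcl hLbdd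
    obtain ⟨xs, hxsL, hxsmin⟩ := hLcomp.exists_isMinOn hLne
      ((MvPolynomial.continuous_eval p).continuousOn)
    have hxsSOL : xs ∈ SOLmin K (fun x => eval x p) := by
      refine ⟨hxsL.1, fun y hy => ?_⟩
      by_cases hyc : eval y p ≤ eval xbar p
      · exact hxsmin ⟨hy, hyc⟩
      · exact le_trans (hxsmin ⟨hxbarK, le_refl _⟩) (le_of_not_ge hyc)
    refine ⟨⟨xs, hxsSOL⟩, hLbdd.subset fun z hz => ?_⟩
    exact ⟨hz.1, hz.2 xbar hxbarK⟩
  · rintro ⟨⟨xs, hxsK, hxsmin⟩, hbdd⟩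
    refine ⟨⟨eval xs p, fun x hx => hxsmin x hx⟩, xs, hxsK, {xs},
      Set.singleton_nonempty xs, isClosed_singleton, ?_, ?_, ?_⟩
    · -- the sublevel set at the minimum equals the solution set, which is bounded
      have hsub : {x ∈ K | eval x p ≤ eval xs p} = SOLmin K (fun x => eval x p) := by
        ext x
        constructor
        · rintro ⟨hxK, hxle⟩
          exact ⟨hxK, fun y hy => le_trans hxle (hxsmin y hy)⟩
        · rintro ⟨hxK, hxmin⟩
          exact ⟨hxK, hxmin xs hxsK⟩
      rw [hsub]
      intro v hv
      have hv0 : v = 0 := asymCone_subset_zero hbdd hv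
      rw [hv0]
      exact zero_mem_asymCone_s17 (Set.singleton_nonempty xs)
    · exact asymCone_mono (Set.singleton_subset_iff.mpr hxsK)
    · refine (isBounded_singleton (x := (0 : Fin n → ℝ))).subset ?_
      intro v hv
      exact asymCone_subset_zero (Bornology.isBounded_singleton (x := xs)) hv.1
end
end
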